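/- The number of equivalence classes of labelings of the star graph K_{1,d} under Reeder's moves equals 2^{d-1} + 1. -/

import Mathlib

/-- Reeder's move `T_i`. -/
def move {V : Type} [Fintype V] [DecidableEq V] (D : SimpleGraph V) [DecidableRel D.Adj]
    (i : V) (a : V → ZMod 2) : V → ZMod 2 :=
  fun j => if j = i then a i + ∑ k ∈ D.neighborFinset i, a k else a j

/-- One step of Reeder's game: apply some move. -/
def reederStep {V : Type} [Fintype V] [DecidableEq V] (D : SimpleGraph V)
    [DecidableRel D.Adj] (a b : V → ZMod 2) : Prop :=
  ∃ i, b = move D i a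

/-- The star graph `K_{1,d}`: center `0` adjacent to `d` leaves. -/
def starG (d : ℕ) : SimpleGraph (Fin (d + 1)) where
  Adj i j := (i = 0 ∧ j ≠ 0) ∨ (j = 0 ∧ i ≠ 0)
  symm := ⟨by intro i j h; tauto⟩
  loopless := ⟨by intro i h; tauto⟩

instance (d : ℕ) : DecidableRel (starG d).Adj :=
  fun i j => inferInstanceAs (Decidable ((i = 0 ∧ j ≠ 0) ∨ (j = 0 ∧ i ≠ 0)))

section Aux

variable {V : Type} [Fintype V] [DecidableEq V] (D : SimpleGraph V) [DecidableRel D.Adj]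

lemma move_apply_ne (i j : V) (a : V → ZMod 2) (h : j ≠ i) : move D i a j = a j := if_neg h

lemma move_apply_self (i : V) (a : V → ZMod 2) :
    move D i a i = a i + ∑ k ∈ D.neighborFinset i, a k := if_pos rfl

lemma move_move (i : V) (a : V → ZMod 2) : move D i (move D i a) = a := by
  funext j
  by_cases hj : j = i
  · subst hj
    rw [move_apply_self]
    have hs : ∑ k ∈ D.neighborFinset j, move D j a k = ∑ k ∈ D.neighborFinset j, a k := by
      refine Finset.sum_congr rfl fun k hk => ?_
      refine move_apply_ne D j k a fun h => ?_
      rw [h] at hk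
      exact D.irrefl ((SimpleGraph.mem_neighborFinset D j j).mp hk)
    rw [hs, move_apply_self, add_assoc, CharTwo.add_self_eq_zero, add_zero]
  · rw [move_apply_ne D i j _ hj, move_apply_ne D i j _ hj]

end Aux

section Star

variable {d : ℕ}

lemma star_nbr_leaf (i : Fin (d + 1)) (hi : i ≠ 0) :
    (starG d).neighborFinset i = {0} := by
  ext j
  simp only [SimpleGraph.mem_neighborFinset, Finset.mem_singleton]
  show (i = 0 ∧ j ≠ 0) ∨ (j = 0 ∧ i ≠ 0) ↔ j = 0
  constructor
  · rintro (⟨h, _⟩ | ⟨h, _⟩) <;> first | exact absurd h hi | exact h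
  · intro h; exact Or.inr ⟨h, hi⟩

/-- The center-sum. -/
def cS (a : Fin (d + 1) → ZMod 2) : ZMod 2 := ∑ k ∈ (starG d).neighborFinset 0, a k

/-- A labeling is frozen iff all moves fix it. -/
def Frozen (a : Fin (d + 1) → ZMod 2) : Prop := a 0 = 0 ∧ cS a = 0

instance : DecidablePred (Frozen (d := d)) := fun a =>
  inferInstanceAs (Decidable (_ ∧ _))

lemma move_of_frozen {a : Fin (d + 1) → ZMod 2} (h : Frozen a) (i : Fin (d + 1)) :
    move (starG d) i a = a := by
  funext j
  by_cases hj : j = i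
  · subst hj
    rw [move_apply_self]
    by_cases h0 : j = 0
    · subst h0
      rw [show ∑ k ∈ (starG d).neighborFinset 0, a k = cS a from rfl, h.2, add_zero]
    · rw [star_nbr_leaf j h0, Finset.sum_singleton, h.1, add_zero]
  · exact move_apply_ne _ _ _ _ hj

lemma frozen_of_frozen_move {a : Fin (d + 1) → ZMod 2} {i : Fin (d + 1)}
    (h : Frozen (move (starG d) i a)) : Frozen a := by
  have := move_of_frozen h i
  rw [move_move] at this
  rwa [this]

/-- The canonical non-frozen labeling. -/
def canon : Fin (d + 1) → ZMod 2 := fun j => if j = 0 then 1 else 0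

lemma canon_not_frozen : ¬ Frozen (canon (d := d)) := by
  intro h
  have := h.1
  simp [canon] at this

lemma zmod2_cases : ∀ x : ZMod 2, x = 0 ∨ x = 1 := by decide

lemma reach_center_one : ∀ (n : ℕ) (a : Fin (d + 1) → ZMod 2), a 0 = 1 →
    (Finset.univ.filter fun i => i ≠ (0 : Fin (d + 1)) ∧ a i = 1).card = n →
    Quot.mk (reederStep (starG d)) a = Quot.mk _ canon := by
  intro n
  induction n with
  | zero =>
    intro a h0 hc
    have hempty := Finset.card_eq_zero.mp hc
    have : a = canon := by
      funext j
      by_cases hj : j = 0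
      · subst hj; simp [canon, h0]
      · have hj1 : a j ≠ 1 := by
          intro h1
          have : j ∈ Finset.univ.filter fun i => i ≠ (0 : Fin (d + 1)) ∧ a i = 1 := by
            simp [hj, h1]
          rw [hempty] at this
          exact absurd this (Finset.notMem_empty j)
        rcases zmod2_cases (a j) with h | h
        · simp [canon, hj, h]
        · exact absurd h hj1
    rw [this]
  | succ n ih =>
    intro a h0 hc
    have hne : (Finset.univ.filter fun i => i ≠ (0 : Fin (d + 1)) ∧ a i = 1).Nonempty := by
      rw [← Finset.card_pos, hc]; omega
    obtain ⟨i, hi⟩ := hne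
    simp only [Finset.mem_filter, Finset.mem_univ, true_and] at hi
    have hstep : Quot.mk (reederStep (starG d)) a = Quot.mk _ (move (starG d) i a) :=
      Quot.sound ⟨i, rfl⟩
    rw [hstep]
    refine ih (move (starG d) i a) ?_ ?_
    · rw [move_apply_ne _ _ _ _ (Ne.symm hi.1), h0]
    · have hset : (Finset.univ.filter fun j => j ≠ (0 : Fin (d + 1)) ∧ move (starG d) i a j = 1)
          = (Finset.univ.filter fun j => j ≠ (0 : Fin (d + 1)) ∧ a j = 1).erase i := by
        ext j
        simp only [Finset.mem_filter, Finset.mem_univ, true_and, Finset.mem_erase]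
        by_cases hji : j = i
        · subst hji
          rw [move_apply_self, star_nbr_leaf j hi.1, Finset.sum_singleton, hi.2, h0]
          simp
        · rw [move_apply_ne _ _ _ _ hji]
          tauto
      rw [hset, Finset.card_erase_of_mem (by simp [hi.1, hi.2]), hc]
      omega

lemma reach_canon {a : Fin (d + 1) → ZMod 2} (h : ¬ Frozen a) :
    Quot.mk (reederStep (starG d)) a = Quot.mk _ canon := by
  rcases zmod2_cases (a 0) with h0 | h0
  · have hS : cS a = 1 := by
      rcases zmod2_cases (cS a) with h1 | h1
      · exact absurd ⟨h0, h1⟩ h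
      · exact h1
    have hstep : Quot.mk (reederStep (starG d)) a = Quot.mk _ (move (starG d) 0 a) :=
      Quot.sound ⟨0, rfl⟩
    rw [hstep]
    refine reach_center_one _ _ ?_ rfl
    rw [move_apply_self]
    rw [show ∑ k ∈ (starG d).neighborFinset 0, a k = cS a from rfl, h0, hS, zero_add]
  · exact reach_center_one _ a h0 rfl

/-- Classifying map. -/
def classify (a : Fin (d + 1) → ZMod 2) :
    {b : Fin (d + 1) → ZMod 2 // Frozen b} ⊕ Unit :=
  if h : Frozen a then Sum.inl ⟨a, h⟩ else Sum.inr ()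

lemma classify_const {a b : Fin (d + 1) → ZMod 2} (h : reederStep (starG d) a b) :
    classify a = classify b := by
  obtain ⟨i, rfl⟩ := h
  by_cases hf : Frozen a
  · rw [move_of_frozen hf]
  · have hf' : ¬ Frozen (move (starG d) i a) := fun h' => hf (frozen_of_frozen_move h')
    simp [classify, hf, hf']

/-- The induced map on classes. -/
def classifyQ : Quot (reederStep (starG d)) → ({b : Fin (d + 1) → ZMod 2 // Frozen b} ⊕ Unit) :=
  Quot.lift classify fun _ _ h => classify_const h

lemma classifyQ_bij : Function.Bijective (classifyQ (d := d)) := by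
  constructor
  · intro x y
    induction x using Quot.ind with | _ a =>
    induction y using Quot.ind with | _ b =>
    intro hxy
    have hxy' : classify a = classify b := hxy
    by_cases ha : Frozen a <;> by_cases hb : Frozen b
    · simp only [classify, dif_pos ha, dif_pos hb, Sum.inl.injEq, Subtype.mk.injEq] at hxy'
      rw [hxy']
    · simp [classify, dif_pos ha, dif_neg hb] at hxy'
    · simp [classify, dif_neg ha, dif_pos hb] at hxy'
    · rw [reach_canon ha, reach_canon hb]
  · intro x
    rcases x with ⟨a, ha⟩ | u
    · exact ⟨Quot.mk _ a, by simp [classifyQ, classify, ha]⟩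
    · refine ⟨Quot.mk _ (canon (d := d)), ?_⟩
      simp [classifyQ, classify, canon_not_frozen]

/-- Count frozen labelings via the kernel of a linear constraint map. -/
def phi : (Fin (d + 1) → ZMod 2) →+ (ZMod 2 × ZMod 2) where
  toFun a := (a 0, cS a)
  map_zero' := by simp [cS]
  map_add' a b := by
    simp only [cS, Pi.add_apply, Finset.sum_add_distrib, Prod.mk_add_mk]

lemma phi_surj (hd : 1 ≤ d) : Function.Surjective (phi (d := d)) := by
  intro p
  have h10 : (1 : Fin (d + 1)) ≠ 0 := by
    intro h
    have := congrArg Fin.val h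
    simp [Fin.val_one, Nat.mod_eq_of_lt (by omega : 1 < d + 1)] at this
  refine ⟨fun j => if j = 0 then p.1 else if j = 1 then p.2 else 0, ?_⟩
  have h1mem : (1 : Fin (d + 1)) ∈ (starG d).neighborFinset 0 := by
    rw [SimpleGraph.mem_neighborFinset]
    exact Or.inl ⟨rfl, h10⟩
  have h0mem : (0 : Fin (d + 1)) ∉ (starG d).neighborFinset 0 := by
    rw [SimpleGraph.mem_neighborFinset]
    exact (starG d).irrefl
  simp only [phi, AddMonoidHom.coe_mk, ZeroHom.coe_mk, cS]
  refine Prod.ext ?_ ?_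
  · simp
  · show (∑ k ∈ (starG d).neighborFinset 0, if k = 0 then p.1 else if k = 1 then p.2 else 0) = p.2
    rw [Finset.sum_congr rfl (fun k hk => ?_)]
    · exact (Finset.sum_ite_eq' _ 1 (fun _ => p.2)).trans (by simp [h1mem])
    · have hk0 : k ≠ 0 := fun h => h0mem (h ▸ hk)
      simp [hk0]

lemma card_frozen (hd : 1 ≤ d) :
    Nat.card {b : Fin (d + 1) → ZMod 2 // Frozen b} = 2 ^ (d - 1) := by
  have hker : Nat.card {b : Fin (d + 1) → ZMod 2 // Frozen b} = Nat.card (phi (d := d)).ker := by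
    refine Nat.card_congr (Equiv.subtypeEquivRight fun a => ?_)
    rw [AddMonoidHom.mem_ker]
    constructor
    · rintro ⟨h1, h2⟩; exact Prod.ext h1 h2
    · intro h
      exact ⟨congrArg Prod.fst h, congrArg Prod.snd h⟩
  rw [hker]
  have htot := AddSubgroup.card_eq_card_quotient_mul_card_addSubgroup (phi (d := d)).ker
  have hquot : Nat.card ((Fin (d + 1) → ZMod 2) ⧸ (phi (d := d)).ker) = 4 := by
    rw [Nat.card_congr (QuotientAddGroup.quotientKerEquivOfSurjective _ (phi_surj hd)).toEquiv]
    simp [Nat.card_prod]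
  have hfun : Nat.card (Fin (d + 1) → ZMod 2) = 2 ^ (d + 1) := by
    rw [Nat.card_fun]
    simp
  rw [hfun, hquot] at htot
  have : 2 ^ (d + 1) = 4 * 2 ^ (d - 1) := by
    rw [show d + 1 = (d - 1) + 2 by omega, pow_add]
    ring
  omega

end Star

/-- The number of equivalence classes of labelings of the star graph `K_{1,d}` under
Reeder's moves equals `2^(d-1) + 1`. -/
theorem starG_card_classes (d : ℕ) (hd : 1 ≤ d) :
    Nat.card (Quot (reederStep (starG d))) = 2 ^ (d - 1) + 1 := by
  rw [Nat.card_congr (Equiv.ofBijective _ (classifyQ_bij (d := d)))]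
  rw [Nat.card_sum, card_frozen hd]
  simp
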